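/- Every connected undirected graph with n vertices and m edges admits a bipartition V = V1 ∪ V2 with e(V1,V2) ≥ m/2 + (n−1)/4. -/

import Mathlib

set_option linter.unusedSectionVars false
set_option linter.unreachableTactic false
set_option linter.unusedTactic false
set_option maxHeartbeats 1000000

open Finset SimpleGraph

universe u

section Helpers

variable {V : Type u} [Fintype V] [DecidableEq V]
variable (G : SimpleGraph V) [DecidableRel G.Adj]

def cnt (G : SimpleGraph V) [DecidableRel G.Adj] (S T : Finset V) : ℕ :=
  ∑ a ∈ S, ∑ b ∈ T, if G.Adj a b then 1 else 0

variable (G : SimpleGraph V) [DecidableRel G.Adj]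

lemma cnt_symm (S T : Finset V) : cnt G S T = cnt G T S := by
  unfold cnt; rw [Finset.sum_comm]
  exact Finset.sum_congr rfl fun a _ => Finset.sum_congr rfl fun b _ => by
    simp [SimpleGraph.adj_comm]

lemma cnt_union_left {S T : Finset V} (h : Disjoint S T) (U : Finset V) :
    cnt G (S ∪ T) U = cnt G S U + cnt G T U := Finset.sum_union h

lemma cnt_union_right (U : Finset V) {S T : Finset V} (h : Disjoint S T) :
    cnt G U (S ∪ T) = cnt G U S + cnt G U T := by
  unfold cnt; rw [← Finset.sum_add_distrib]
  exact Finset.sum_congr rfl fun a _ => Finset.sum_union h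

lemma cnt_singleton_self (v : V) : cnt G {v} {v} = 0 := by
  simp [cnt, Finset.filter_singleton]

lemma cnt_singleton_singleton (u v : V) : cnt G {u} {v} = if G.Adj u v then 1 else 0 := by
  simp [cnt, Finset.filter_singleton]
  by_cases h : G.Adj u v <;> simp [h]

lemma cnt_singleton_univ (v : V) : cnt G {v} Finset.univ = G.degree v := by
  rw [← SimpleGraph.card_neighborFinset_eq_degree, SimpleGraph.neighborFinset_eq_filter,
    Finset.card_filter]
  simp [cnt]

lemma cnt_univ_univ : cnt G Finset.univ Finset.univ = 2 * G.edgeFinset.card := by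
  rw [← SimpleGraph.sum_degrees_eq_twice_card_edges]
  refine Finset.sum_congr rfl fun v _ => ?_
  rw [← cnt_singleton_univ G v]
  simp [cnt]

instance instDecInduce (s : Set V) [DecidablePred (· ∈ s)] :
    DecidableRel (G.induce s).Adj := fun a b => inferInstanceAs (Decidable (G.Adj a b))

lemma cnt_induce (s : Set V) [DecidablePred (· ∈ s)] (S T : Finset ↥s) :
    cnt (G.induce s) S T
      = cnt G (S.map (Function.Embedding.subtype _)) (T.map (Function.Embedding.subtype _)) := by
  unfold cnt
  rw [Finset.sum_map]
  refine Finset.sum_congr rfl fun a _ => ?_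
  rw [Finset.sum_map]
  rfl

lemma map_univ_subtype (s : Set V) [DecidablePred (· ∈ s)] :
    (Finset.univ : Finset ↥s).map (Function.Embedding.subtype _) = s.toFinset := by
  ext x; simp

lemma map_compl_subtype (s : Set V) [DecidablePred (· ∈ s)] (S : Finset ↥s) :
    (Sᶜ).map (Function.Embedding.subtype _)
      = s.toFinset \ S.map (Function.Embedding.subtype _) := by
  ext x
  simp only [Finset.mem_map, Finset.mem_compl, Finset.mem_sdiff, Set.mem_toFinset,
    Function.Embedding.coe_subtype]
  constructor
  · rintro ⟨⟨y, hy⟩, h, rfl⟩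
    exact ⟨hy, fun ⟨⟨z,hz⟩, hz2, hzz⟩ => h (by cases hzz; exact hz2)⟩
  · rintro ⟨hx, h2⟩
    exact ⟨⟨x, hx⟩, fun hmem => h2 ⟨⟨x, hx⟩, hmem, rfl⟩, rfl⟩


lemma cnt_eq_card (S T : Finset V) :
    ((S ×ˢ T).filter fun p => G.Adj p.1 p.2).card = cnt G S T := by
  rw [Finset.card_filter, Finset.sum_product]; rfl

lemma mem_compl_of_adj {v a : V} (ha : G.Adj v a) : a ∈ ({v}ᶜ : Set V) :=
  fun h => G.irrefl ((Set.mem_singleton_iff.mp h) ▸ ha)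

lemma reachable_induce_of_walk {s : Set V} {a b : V} (w : G.Walk a b)
    (hs : ∀ x ∈ w.support, x ∈ s) (ha : a ∈ s) (hb : b ∈ s) :
    (G.induce s).Reachable ⟨a, ha⟩ ⟨b, hb⟩ := by
  induction w with
  | nil => exact Reachable.refl _
  | @cons u c d h w ih =>
      have hc : c ∈ s := hs c (by simp)
      have h1 : (G.induce s).Adj ⟨u, ha⟩ ⟨c, hc⟩ := by simpa using h
      exact h1.reachable.trans (ih (fun x hx => hs x (by simp [hx])) hc hb)

lemma reach_avoid (v : V)
    (hN : ∀ a b (ha : G.Adj v a) (hb : G.Adj v b), (G.induce {v}ᶜ).Reachable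
      ⟨a, mem_compl_of_adj G ha⟩ ⟨b, mem_compl_of_adj G hb⟩) :
    ∀ n {a b : V} (w : G.Walk a b), w.length ≤ n → ∀ (ha : a ∈ ({v}ᶜ : Set V))
      (hb : b ∈ ({v}ᶜ : Set V)),
      (G.induce {v}ᶜ).Reachable ⟨a, ha⟩ ⟨b, hb⟩ := by
  intro n
  induction n with
  | zero =>
      intro a b w hw ha hb
      cases w with
      | nil => exact Reachable.refl _
      | cons h w => simp at hw
  | succ n ih =>
      intro a b w hw ha hb
      cases w with
      | nil => exact Reachable.refl _
      | @cons _ c _ h w =>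
          by_cases hc : c = v
          · subst hc
            cases w with
            | nil => exact absurd rfl hb
            | @cons _ c' _ h2 w2 =>
                have hc' : c' ∈ ({c}ᶜ : Set V) := mem_compl_of_adj G h2
                have r1 := hN a c' h.symm h2
                have r2 := ih w2 (by simp at hw; omega) hc' hb
                exact r1.trans r2
          · have hcs : c ∈ ({v}ᶜ : Set V) := hc
            have h1 : (G.induce ({v}ᶜ : Set V)).Adj ⟨a, ha⟩ ⟨c, hcs⟩ := by simpa using h
            exact h1.reachable.trans (ih w (by simp at hw; omega) hcs hb)

lemma connected_induce_compl_singleton (hG : G.Connected) (v : V) [Nonempty ↥({v}ᶜ : Set V)]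
    (hN : ∀ a b (ha : G.Adj v a) (hb : G.Adj v b), (G.induce {v}ᶜ).Reachable
      ⟨a, mem_compl_of_adj G ha⟩ ⟨b, mem_compl_of_adj G hb⟩) :
    (G.induce ({v}ᶜ : Set V)).Connected := by
  rw [connected_iff]
  refine ⟨fun x y => ?_, inferInstance⟩
  obtain ⟨w⟩ := hG.preconnected x.1 y.1
  have := reach_avoid G v hN w.length w le_rfl x.2 y.2
  convert this <;> exact Subtype.ext rfl

lemma exists_longest_path [Nonempty V] :
    ∃ (a b : V) (p : G.Walk a b), p.IsPath ∧
      ∀ (c d : V) (q : G.Walk c d), q.IsPath → q.length ≤ p.length := by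
  by_contra hcon
  push_neg at hcon
  have key : ∀ n : ℕ, ∃ (a b : V) (p : G.Walk a b), p.IsPath ∧ n ≤ p.length := by
    intro n
    induction n with
    | zero =>
        obtain ⟨v⟩ := ‹Nonempty V›
        exact ⟨v, v, Walk.nil, Walk.IsPath.nil, Nat.zero_le _⟩
    | succ n ih =>
        obtain ⟨a, b, p, hp, hlen⟩ := ih
        obtain ⟨c, d, q, hq, hlen2⟩ := hcon a b p hp
        exact ⟨c, d, q, hq, by omega⟩
  obtain ⟨a, b, p, hp, hlen⟩ := key (Fintype.card V)
  exact absurd hp.length_lt (by omega)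

lemma structural (hG : G.Connected) (hcard : 2 ≤ Fintype.card V) :
    (∃ v : V, Odd (G.degree v) ∧ (G.induce ({v}ᶜ : Set V)).Connected) ∨
    (∃ u v : V, G.Adj u v ∧ (G.induce ({u, v}ᶜ : Set V)).Connected) := by
  have hne : Nonempty V := hG.nonempty
  obtain ⟨x₀, y, p, hp, hmax⟩ := exists_longest_path G
  have hA : ∀ a, G.Adj x₀ a → a ∈ p.support := by
    intro a ha
    by_contra hns
    have hq : (Walk.cons ha.symm p).IsPath := hp.cons hns
    have := hmax _ _ _ hq
    simp [Walk.length_cons] at this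
  have hne0 : Nonempty ↥({x₀}ᶜ : Set V) := by
    obtain ⟨w, hw⟩ := Fintype.exists_ne_of_one_lt_card (by omega) x₀
    exact ⟨⟨w, by simp [hw]⟩⟩
  have hconn0 : (G.induce ({x₀}ᶜ : Set V)).Connected := by
    apply connected_induce_compl_singleton G hG x₀
    intro a b ha hb
    cases p with
    | nil =>
        have := hA a ha
        simp at this
        exact absurd this ha.ne'
    | @cons _ x₁ _ h01 p1 =>
        have hx0p1 : x₀ ∉ p1.support := ((Walk.cons_isPath_iff _ _).mp hp).2
        have hsub : ∀ c, G.Adj x₀ c → c ∈ p1.support := by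
          intro c hc
          have := hA c hc
          rw [Walk.support_cons, List.mem_cons] at this
          exact this.resolve_left hc.ne'
        have hss : ∀ x ∈ p1.support, x ∈ ({x₀}ᶜ : Set V) := by
          intro x hx
          simp only [Set.mem_compl_iff, Set.mem_singleton_iff]
          exact fun h => hx0p1 (h ▸ hx)
        have hr : ∀ c (hc : G.Adj x₀ c), (G.induce ({x₀}ᶜ : Set V)).Reachable
            ⟨x₁, hss _ p1.start_mem_support⟩ ⟨c, mem_compl_of_adj G hc⟩ := by
          intro c hc
          have hcp := hsub c hc
          exact reachable_induce_of_walk G (p1.takeUntil c hcp)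
            (fun x hx => hss x (p1.support_takeUntil_subset hcp hx)) _ _
        exact (hr a ha).symm.trans (hr b hb)
  by_cases hL : ∃ v : V, Odd (G.degree v) ∧ (G.induce ({v}ᶜ : Set V)).Connected
  · exact Or.inl hL
  right
  have heven : Even (G.degree x₀) :=
    Nat.not_odd_iff_even.mp (fun h => hL ⟨x₀, h, hconn0⟩)
  -- degree x₀ ≥ 1
  have hdegpos : 0 < G.degree x₀ := by
    obtain ⟨⟨w, hw⟩⟩ := hne0
    obtain ⟨wk⟩ := hG.preconnected x₀ w
    cases wk with
    | nil => simp at hw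
    | cons h _ => exact G.degree_pos_iff_exists_adj x₀ |>.mpr ⟨_, h⟩
  have hdeg2 : 2 ≤ G.degree x₀ := by
    rcases heven with ⟨k, hk⟩; omega
  obtain ⟨a₁, ha₁, a₂, ha₂, hane⟩ := Finset.one_lt_card.mp
    (by rw [G.card_neighborFinset_eq_degree x₀]; omega : 1 < (G.neighborFinset x₀).card)
  rw [mem_neighborFinset] at ha₁ ha₂
  cases p with
  | nil =>
      have := hA a₁ ha₁; simp at this; exact absurd this ha₁.ne'
  | @cons _ x₁ _ h01 p1 =>
    cases p1 with
    | nil =>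
        have h1 := hA a₁ ha₁
        have h2 := hA a₂ ha₂
        simp [Walk.support_cons] at h1 h2
        rcases h1 with h1|h1
        · exact absurd h1 ha₁.ne'
        rcases h2 with h2|h2
        · exact absurd h2 ha₂.ne'
        exact absurd (h1.trans h2.symm) hane
    | @cons _ x₂ _ h12 p2 =>
      have hp' : (Walk.cons h12 p2).IsPath := ((Walk.cons_isPath_iff _ _).mp hp).1
      have hx0n : x₀ ∉ (Walk.cons h12 p2).support := ((Walk.cons_isPath_iff _ _).mp hp).2
      have hp2 : p2.IsPath := ((Walk.cons_isPath_iff _ _).mp hp').1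
      have hx1n : x₁ ∉ p2.support := ((Walk.cons_isPath_iff _ _).mp hp').2
      have hx0p2 : x₀ ∉ p2.support := fun h => hx0n (by simp [Walk.support_cons, h])
      set s : Set V := ({x₀, x₁}ᶜ : Set V) with hs
      have hmem : ∀ w, w ≠ x₀ → w ≠ x₁ → w ∈ s := by
        intro w h0 h1; simp [hs, h0, h1]
      have hmemp2 : ∀ w ∈ p2.support, w ∈ s := fun w hw =>
        hmem w (fun h => hx0p2 (h ▸ hw)) (fun h => hx1n (h ▸ hw))
      have hx2s : x₂ ∈ s := hmemp2 _ p2.start_mem_support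
      have hsx0 : ∀ w ∈ s, w ≠ x₀ ∧ w ≠ x₁ := by
        intro w hw
        constructor <;> (rintro rfl; simp [hs] at hw)
      let R : V → Prop := fun w => ∃ hws : w ∈ s, (G.induce s).Reachable ⟨w, hws⟩ ⟨x₂, hx2s⟩
      have htail : ∀ w ∈ p2.support, R w := by
        intro w hw
        refine ⟨hmemp2 w hw, ?_⟩
        exact (reachable_induce_of_walk G (p2.takeUntil w hw)
          (fun x hx => hmemp2 x (p2.support_takeUntil_subset hw hx)) hx2s (hmemp2 w hw)).symm
      have hA' : ∀ a, G.Adj x₀ a → a = x₁ ∨ a ∈ p2.support := by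
        intro a ha
        have h := hA a ha
        simp [Walk.support_cons] at h
        rcases h with h|h|h
        · exact absurd h ha.ne'
        · exact Or.inl h
        · exact Or.inr h
      have hmax' : ∀ (c d : V) (q : G.Walk c d), q.IsPath → q.length ≤ p2.length + 2 := by
        intro c d q hq
        have := hmax c d q hq
        simpa [Walk.length_cons] using this
      have hstar : ∀ a, G.Adj x₁ a → a ∈ s → R a := by
        intro a hax has
        by_contra hnr
        have hanp2 : a ∉ p2.support := fun h => hnr (htail a h)
        have hnb : ∀ a', G.Adj a a' → a' = x₁ := by
          intro a' ha'
          by_contra hne'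
          have ha'x0 : a' ≠ x₀ := by
            rintro rfl
            rcases hA' a ha'.symm with h|h
            · exact (hsx0 a has).2 h
            · exact hanp2 h
          have ha's : a' ∈ s := hmem a' ha'x0 hne'
          have ha'p2 : a' ∉ p2.support := by
            intro h
            obtain ⟨hws, hr⟩ := htail a' h
            have hadj : (G.induce s).Adj ⟨a, has⟩ ⟨a', hws⟩ := by simpa using ha'
            exact hnr ⟨has, hadj.reachable.trans hr⟩
          have hq : (Walk.cons ha'.symm (Walk.cons hax.symm (Walk.cons h12 p2))).IsPath := by
            rw [Walk.cons_isPath_iff]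
            constructor
            · rw [Walk.cons_isPath_iff]
              refine ⟨hp', ?_⟩
              simp only [Walk.support_cons, List.mem_cons, not_or]
              exact ⟨hax.ne', hanp2⟩
            · simp only [Walk.support_cons, List.mem_cons, not_or]
              exact ⟨ha'.ne', ⟨hne', ha'p2⟩⟩
          have := hmax' _ _ _ hq
          simp [Walk.length_cons] at this
        have hdega : G.neighborFinset a = {x₁} := by
          ext b
          simp only [mem_neighborFinset, Finset.mem_singleton]
          exact ⟨hnb b, fun h => h ▸ hax.symm⟩
        have hodda : Odd (G.degree a) := by
          rw [← G.card_neighborFinset_eq_degree, hdega]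
          simp
        have hx1a : x₁ ∈ ({a}ᶜ : Set V) := fun h => hax.ne (Set.mem_singleton_iff.mp h)
        haveI : Nonempty ↥({a}ᶜ : Set V) := ⟨⟨x₁, hx1a⟩⟩
        have hconna : (G.induce ({a}ᶜ : Set V)).Connected := by
          apply connected_induce_compl_singleton G hG a
          intro c d hc hd
          have hcx := hnb c hc
          have hdx := hnb d hd
          subst hcx; subst hdx
          exact Reachable.refl _
        exact hL ⟨a, hodda, hconna⟩
      have hkey : ∀ {c d : V} (wk : G.Walk c d), c ∈ s → R d → R c := by
        intro c d wk
        induction wk with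
        | nil => exact fun _ h => h
        | @cons u e d' h w ih =>
            intro hu hRd
            by_cases he0 : e = x₀
            · subst he0
              rcases hA' u h.symm with h1|h1
              · exact absurd h1 (hsx0 u hu).2
              · exact htail u h1
            by_cases he1 : e = x₁
            · subst he1
              exact hstar u h.symm hu
            · have hes : e ∈ s := hmem e he0 he1
              obtain ⟨hws, hr⟩ := ih hes hRd
              have hadj : (G.induce s).Adj ⟨u, hu⟩ ⟨e, hws⟩ := by simpa using h
              exact ⟨hu, hadj.reachable.trans hr⟩
      refine ⟨x₀, x₁, h01, ?_⟩
      rw [connected_iff]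
      refine ⟨fun X Y => ?_, ⟨⟨x₂, hx2s⟩⟩⟩
      obtain ⟨w1⟩ := hG.preconnected X.1 x₂
      obtain ⟨w2⟩ := hG.preconnected Y.1 x₂
      obtain ⟨h1, r1⟩ := hkey w1 X.2 ⟨hx2s, Reachable.refl _⟩
      obtain ⟨h2, r2⟩ := hkey w2 Y.2 ⟨hx2s, Reachable.refl _⟩
      have hXY := r1.trans r2.symm
      convert hXY <;> exact Subtype.ext rfl


lemma aux : ∀ (N : ℕ) {V : Type u} [Fintype V] [DecidableEq V] (G : SimpleGraph V)
    [DecidableRel G.Adj], G.Connected → Fintype.card V = N →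
    ∃ S : Finset V, 2 * G.edgeFinset.card + Fintype.card V ≤ 4 * cnt G S Sᶜ + 1 := by
  intro N
  induction N using Nat.strong_induction_on with
  | _ N ih =>
  intro V _ _ G _ hG hNV
  have hne : Nonempty V := hG.nonempty
  have hN1 : 1 ≤ N := by rw [← hNV]; exact Fintype.card_pos
  by_cases hN2 : N = 1
  · -- single vertex
    refine ⟨∅, ?_⟩
    have hm : 2 * G.edgeFinset.card = 0 := by
      rw [← cnt_univ_univ]
      unfold cnt
      refine Finset.sum_eq_zero fun a _ => Finset.sum_eq_zero fun b _ => ?_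
      have : a = b := by
        have := Fintype.card_le_one_iff.mp (by omega : Fintype.card V ≤ 1)
        exact this a b
      simp [this]
    omega
  -- N ≥ 2
  have hcard2 : 2 ≤ Fintype.card V := by omega
  rcases structural G hG hcard2 with ⟨v, hodd, hconn'⟩ | ⟨u, v, huv, hconn'⟩
  · -- case 1
    classical
    set s : Set V := ({v}ᶜ : Set V) with hsdef
    haveI hdec : DecidablePred (· ∈ s) := fun x => decidable_of_iff (¬ (x = v)) (by simp [hsdef])
    set rest : Finset V := ({v} : Finset V)ᶜ with hrest
    have hsto : s.toFinset = rest := by ext x; simp [hsdef, hrest]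
    have hcards : Fintype.card ↥s = N - 1 := by
      rw [← Set.toFinset_card, hsto, hrest, Finset.card_compl, Finset.card_singleton, hNV]
    obtain ⟨S', hS'⟩ := ih (N-1) (by omega) (G.induce s) hconn' hcards
    set A : Finset V := S'.map (Function.Embedding.subtype _) with hA
    set B : Finset V := rest \ A with hB
    have hvA : v ∉ A := by
      intro hv
      rw [hA] at hv
      simp only [Finset.mem_map, Function.Embedding.coe_subtype] at hv
      obtain ⟨⟨x, hx⟩, _, hxv⟩ := hv
      have hxv' : x = v := hxv
      exact hx (by simp [hsdef, hxv'])
    have hAB : Disjoint A B := Finset.disjoint_sdiff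
    have hArest : A ⊆ rest := by
      intro x hx
      rw [hA] at hx
      simp only [Finset.mem_map, Function.Embedding.coe_subtype] at hx
      obtain ⟨⟨y, hy⟩, _, hyx⟩ := hx
      rw [hrest]
      simp only [Finset.mem_compl, Finset.mem_singleton]
      rw [← hyx]
      simpa [hsdef] using hy
    have hABrest : A ∪ B = rest := Finset.union_sdiff_of_subset hArest
    have hdisjrv : Disjoint rest ({v} : Finset V) := by
      rw [hrest]; exact disjoint_compl_left
    have huniv : rest ∪ {v} = Finset.univ := by
      ext x; by_cases hxv : x = v <;> simp [hrest, hxv]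
    -- edge counts
    have hm' : 2 * (G.induce s).edgeFinset.card = cnt G rest rest := by
      rw [← cnt_univ_univ, cnt_induce, map_univ_subtype, hsto]
    have hm : 2 * G.edgeFinset.card = cnt G rest rest + 2 * G.degree v := by
      rw [← cnt_univ_univ, ← huniv, cnt_union_left G hdisjrv, cnt_union_right G _ hdisjrv,
        cnt_union_right G _ hdisjrv, cnt_singleton_self, ← cnt_singleton_univ G v, ← huniv,
        cnt_union_right G _ hdisjrv, cnt_singleton_self, cnt_symm G rest {v}]
      ring
    -- cut transfer
    have hcut : cnt (G.induce s) S' S'ᶜ = cnt G A B := by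
      rw [cnt_induce, map_compl_subtype, hsto, ← hA, ← hB]
    -- the two options
    have hopt1 : cnt G A Aᶜ = cnt G A B + cnt G A {v} := by
      have hAc : Aᶜ = B ∪ {v} := by
        ext x
        simp only [Finset.mem_compl, hB, Finset.mem_sdiff, Finset.mem_union, hrest,
          Finset.mem_singleton]
        by_cases hxv : x = v
        · subst hxv; simp [hvA]
        · simp [hxv]
      have hdisjBv : Disjoint B ({v} : Finset V) := by
        refine Finset.disjoint_singleton_right.mpr ?_
        intro h
        have hv2 := (Finset.mem_sdiff.mp (hB ▸ h)).1
        rw [hrest] at hv2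
        simp at hv2
      rw [hAc, cnt_union_right G _ hdisjBv]
    have hopt2 : cnt G (A ∪ {v}) (A ∪ {v})ᶜ = cnt G A B + cnt G {v} B := by
      have hAc : (A ∪ {v})ᶜ = B := by
        ext x
        simp only [Finset.mem_compl, hB, Finset.mem_sdiff, Finset.mem_union, hrest,
          Finset.mem_singleton]
        by_cases hxv : x = v
        · subst hxv; simp
        · simp [hxv]
      rw [hAc, cnt_union_left G (Finset.disjoint_singleton_right.mpr hvA) B]
    -- degree split
    have hdeg : cnt G A {v} + cnt G {v} B = G.degree v := by
      rw [← cnt_singleton_univ G v, ← huniv, cnt_union_right G _ hdisjrv, cnt_singleton_self,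
        ← hABrest, cnt_union_right G _ (hAB), cnt_symm G A {v}]
      ring
    -- oddness
    obtain ⟨k, hk⟩ := hodd
    -- conclude
    rw [hcards] at hS'
    rw [hcut] at hS'
    by_cases hbig : cnt G A {v} ≤ cnt G {v} B
    · exact ⟨A ∪ {v}, by rw [hopt2]; omega⟩
    · exact ⟨A, by rw [hopt1]; omega⟩
  · -- case 2 : remove adjacent u, v
    classical
    have huvne : u ≠ v := huv.ne
    set s : Set V := ({u, v}ᶜ : Set V) with hsdef
    haveI hdec : DecidablePred (· ∈ s) := fun x =>
      decidable_of_iff (¬ (x = u ∨ x = v)) (by simp [hsdef])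
    set rest : Finset V := ({u, v} : Finset V)ᶜ with hrest
    have hsto : s.toFinset = rest := by ext x; simp [hsdef, hrest]
    have hcards : Fintype.card ↥s = N - 2 := by
      rw [← Set.toFinset_card, hsto, hrest, Finset.card_compl, hNV,
        Finset.card_insert_of_notMem (by simp [huvne]), Finset.card_singleton]
    obtain ⟨S', hS'⟩ := ih (N-2) (by omega) (G.induce s) hconn' hcards
    set A : Finset V := S'.map (Function.Embedding.subtype _) with hA
    set B : Finset V := rest \ A with hB
    have hmemA : ∀ x ∈ A, x ≠ u ∧ x ≠ v := by
      intro x hx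
      rw [hA] at hx
      simp only [Finset.mem_map, Function.Embedding.coe_subtype] at hx
      obtain ⟨⟨y, hy⟩, _, hyx⟩ := hx
      have hyx' : y = x := hyx
      rw [← hyx']
      simpa [hsdef, not_or] using hy
    have hmemB : ∀ x ∈ B, x ≠ u ∧ x ≠ v := by
      intro x hx
      have := (Finset.mem_sdiff.mp (hB ▸ hx)).1
      rw [hrest] at this
      simpa [not_or] using this
    have huA : u ∉ A := fun h => (hmemA u h).1 rfl
    have hvA : v ∉ A := fun h => (hmemA v h).2 rfl
    have huB : u ∉ B := fun h => (hmemB u h).1 rfl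
    have hvB : v ∉ B := fun h => (hmemB v h).2 rfl
    have hAB : Disjoint A B := Finset.disjoint_sdiff
    have hArest : A ⊆ rest := by
      intro x hx
      rw [hrest]
      simp only [Finset.mem_compl, Finset.mem_insert, Finset.mem_singleton]
      have := hmemA x hx
      tauto
    have hABrest : A ∪ B = rest := Finset.union_sdiff_of_subset hArest
    set P : Finset V := {u} ∪ {v} with hP
    have hdisjP : Disjoint ({u} : Finset V) ({v} : Finset V) := by simp [huvne, huvne.symm]
    have hdisjrP : Disjoint rest P := by
      rw [Finset.disjoint_left]
      intro x hx hxP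
      rw [hrest] at hx
      rw [hP] at hxP
      simp at hx hxP
      tauto
    have huniv : rest ∪ P = Finset.univ := by
      ext x
      by_cases hxu : x = u
      · simp [hrest, hP, hxu]
      · by_cases hxv : x = v <;> simp [hrest, hP, hxu, hxv]
    -- edge counts
    have hm' : 2 * (G.induce s).edgeFinset.card = cnt G rest rest := by
      rw [← cnt_univ_univ, cnt_induce, map_univ_subtype, hsto]
    have e5 : 2 * G.edgeFinset.card = cnt G Finset.univ Finset.univ := (cnt_univ_univ G).symm
    have e1 : cnt G Finset.univ Finset.univ
        = cnt G rest rest + cnt G rest P + cnt G P rest + cnt G P P := by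
      rw [← huniv, cnt_union_left G hdisjrP, cnt_union_right G _ hdisjrP,
        cnt_union_right G _ hdisjrP]
      ring
    have e2 : cnt G rest P = cnt G P rest := cnt_symm G rest P
    have e4 : cnt G P P = 2 := by
      rw [hP, cnt_union_left G hdisjP, cnt_union_right G _ hdisjP, cnt_union_right G _ hdisjP,
        cnt_singleton_self, cnt_singleton_self, cnt_singleton_singleton,
        cnt_singleton_singleton]
      simp [huv, huv.symm]
    have e3 : cnt G P rest + cnt G P P = G.degree u + G.degree v := by
      have h1 : cnt G P Finset.univ = G.degree u + G.degree v := by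
        rw [hP, cnt_union_left G hdisjP, cnt_singleton_univ, cnt_singleton_univ]
      rw [← h1, ← huniv, cnt_union_right G _ hdisjrP]
    -- cut transfer
    have hcut : cnt (G.induce s) S' S'ᶜ = cnt G A B := by
      rw [cnt_induce, map_compl_subtype, hsto, ← hA, ← hB]
    -- the two cut options
    have hc1 : cnt G (A ∪ {u}) (A ∪ {u})ᶜ
        = cnt G A B + cnt G A {v} + (cnt G {u} B + cnt G {u} {v}) := by
      have hAc : (A ∪ {u})ᶜ = B ∪ {v} := by
        ext x
        simp only [Finset.mem_compl, Finset.mem_union, Finset.mem_singleton]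
        by_cases hxu : x = u
        · subst hxu; simp [huB, huvne]
        · by_cases hxv : x = v
          · subst hxv; simp [hvA, hvB, Ne.symm huvne]
          · constructor
            · intro h
              push_neg at h
              left
              rw [hB, Finset.mem_sdiff, hrest]
              simp [hxu, hxv, h.1]
            · intro h
              push_neg
              refine ⟨?_, hxu⟩
              rcases h with h | h
              · exact fun hA2 => (Finset.disjoint_left.mp hAB) hA2 h
              · exact absurd h hxv
      rw [hAc, cnt_union_left G (Finset.disjoint_singleton_right.mpr huA) _,
        cnt_union_right G _ (Finset.disjoint_singleton_right.mpr hvB),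
        cnt_union_right G _ (Finset.disjoint_singleton_right.mpr hvB)]
    have hc2 : cnt G (B ∪ {u}) (B ∪ {u})ᶜ
        = cnt G A B + cnt G B {v} + (cnt G {u} A + cnt G {u} {v}) := by
      have hAc : (B ∪ {u})ᶜ = A ∪ {v} := by
        ext x
        simp only [Finset.mem_compl, Finset.mem_union, Finset.mem_singleton]
        by_cases hxu : x = u
        · subst hxu; simp [huA, huvne]
        · by_cases hxv : x = v
          · subst hxv; simp [hvA, hvB, Ne.symm huvne]
          · constructor
            · intro h
              push_neg at h
              left
              have hxrest : x ∈ rest := by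
                rw [hrest]; simp [hxu, hxv]
              have := hABrest
              rw [← hABrest, Finset.mem_union] at hxrest
              rcases hxrest with h2 | h2
              · exact h2
              · exact absurd h2 h.1
            · intro h
              push_neg
              refine ⟨?_, hxu⟩
              rcases h with h | h
              · exact fun hB2 => (Finset.disjoint_left.mp hAB) h hB2
              · exact absurd h hxv
      rw [hAc, cnt_union_left G (Finset.disjoint_singleton_right.mpr huB) _,
        cnt_union_right G _ (Finset.disjoint_singleton_right.mpr hvA),
        cnt_union_right G _ (Finset.disjoint_singleton_right.mpr hvA),
        cnt_symm G B A]
    -- degree splits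
    have e7 : cnt G A {v} + cnt G B {v} + 1 = G.degree v := by
      have h1 : cnt G Finset.univ {v} = G.degree v := by
        rw [cnt_symm, cnt_singleton_univ]
      rw [← h1, ← huniv, cnt_union_left G hdisjrP, ← hABrest,
        cnt_union_left G hAB, hP, cnt_union_left G hdisjP,
        cnt_singleton_self, cnt_singleton_singleton]
      simp [huv]
    have e8 : cnt G {u} A + cnt G {u} B + 1 = G.degree u := by
      rw [← cnt_singleton_univ G u, ← huniv, cnt_union_right G _ hdisjrP, ← hABrest,
        cnt_union_right G _ hAB, hP, cnt_union_right G _ hdisjP,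
        cnt_singleton_self, cnt_singleton_singleton]
      simp [huv]
    have e9 : cnt G {u} {v} = 1 := by rw [cnt_singleton_singleton]; simp [huv]
    rw [hcards, hcut] at hS'
    have hN3 : 3 ≤ N := by
      by_contra hlt
      have hN2' : N = 2 := by omega
      have : Fintype.card ↥s = 0 := by omega
      have := hconn'.nonempty
      rw [← Fintype.card_pos_iff] at this
      omega
    by_cases hbig : cnt G A {v} + cnt G {u} B ≤ cnt G B {v} + cnt G {u} A
    · refine ⟨B ∪ {u}, ?_⟩
      rw [hc2]
      omega
    · refine ⟨A ∪ {u}, ?_⟩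
      rw [hc1]
      omega


end Helpers

/-- Every connected graph with `n` vertices and `m` edges admits a bipartition
`V = V₁ ∪ V₂` with `e(V₁,V₂) ≥ m/2 + (n−1)/4`. -/
theorem stmt16 {V : Type*} [Fintype V] [DecidableEq V]
    (G : SimpleGraph V) [DecidableRel G.Adj] (hconn : G.Connected)
    (n m : ℕ) (hn : n = Fintype.card V) (hm : m = G.edgeFinset.card) :
    ∃ V1 : Finset V,
      ((((V1 ×ˢ V1ᶜ).filter fun p => G.Adj p.1 p.2).card : ℝ)
        ≥ (m : ℝ) / 2 + ((n : ℝ) - 1) / 4) := by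
  obtain ⟨S, hS⟩ := aux (Fintype.card V) G hconn rfl
  refine ⟨S, ?_⟩
  rw [cnt_eq_card]
  have hn1 : 1 ≤ n := by
    haveI := hconn.nonempty
    rw [hn]
    exact Fintype.card_pos
  subst hn hm
  have hcast := (Nat.cast_le (α := ℝ)).mpr hS
  push_cast at hcast
  have hn1' : (1 : ℝ) ≤ (Fintype.card V : ℝ) := by exact_mod_cast hn1
  linarith
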